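/- Let d ≥ 1. There exists a constant C > 0, depending only on d, such that for all r > 0 and all ℓ ∈ ℤ^d with |ℓ| ≥ 2r, one has ∑_{k ∈ ℤ^d} (1 + |k|)^{-d} (1 + |ℓ − k|)^{-d} ≤ C (1 + r)^{-d} log(2 + r). -/

import Mathlib

/-- The Euclidean norm of a lattice point `ℓ ∈ ℤ^d`. -/
noncomputable def znorm {d : ℕ} (ℓ : Fin d → ℤ) : ℝ :=
  Real.sqrt (∑ i, ((ℓ i : ℝ)) ^ 2)

namespace Stmt4Aux

variable {d : ℕ}

/-- sup norm of a lattice point, as a natural number -/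
def mm (k : Fin d → ℤ) : ℕ := Finset.univ.sup fun i => (k i).natAbs

lemma natAbs_le_mm (k : Fin d → ℤ) (i : Fin d) : (k i).natAbs ≤ mm k :=
  Finset.le_sup (f := fun i => (k i).natAbs) (Finset.mem_univ i)

lemma mm_le_iff {k : Fin d → ℤ} {n : ℕ} : mm k ≤ n ↔ ∀ i, (k i).natAbs ≤ n := by
  simp [mm, Finset.sup_le_iff]

lemma mm_add_le (a b : Fin d → ℤ) : mm (a + b) ≤ mm a + mm b := by
  rw [mm_le_iff]
  intro i
  exact (Int.natAbs_add_le _ _).trans (add_le_add (natAbs_le_mm a i) (natAbs_le_mm b i))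

lemma mm_neg (a : Fin d → ℤ) : mm (-a) = mm a := by simp [mm]

lemma mm_le_sub_add (ℓ k : Fin d → ℤ) : mm ℓ ≤ mm (ℓ - k) + mm k := by
  have := mm_add_le (ℓ - k) k
  simpa using this

lemma mm_sub_le (ℓ k : Fin d → ℤ) : mm (ℓ - k) ≤ mm ℓ + mm k := by
  have := mm_add_le ℓ (-k)
  rw [mm_neg] at this
  simpa [sub_eq_add_neg] using this

lemma znorm_nonneg (k : Fin d → ℤ) : 0 ≤ znorm k := Real.sqrt_nonneg _

lemma mm_le_znorm (hd : 0 < d) (k : Fin d → ℤ) : (mm k : ℝ) ≤ znorm k := by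
  have : Nonempty (Fin d) := Fin.pos_iff_nonempty.mp hd
  obtain ⟨i, _, hi⟩ := Finset.exists_mem_eq_sup Finset.univ Finset.univ_nonempty
    (fun i => (k i).natAbs)
  rw [mm, hi]
  have h1 : ((k i).natAbs : ℝ) = |(k i : ℝ)| := by
    rw [Nat.cast_natAbs]; push_cast; ring
  rw [h1, ← Real.sqrt_sq_eq_abs]
  apply Real.sqrt_le_sqrt
  exact Finset.single_le_sum (fun j _ => sq_nonneg ((k j : ℝ))) (Finset.mem_univ i)

lemma znorm_le_mm (k : Fin d → ℤ) : znorm k ≤ Real.sqrt d * mm k := by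
  rw [← Real.sqrt_mul_self (by positivity : (0:ℝ) ≤ (mm k : ℝ)), ← Real.sqrt_mul (by positivity)]
  apply Real.sqrt_le_sqrt
  calc ∑ i, ((k i : ℝ)) ^ 2 ≤ ∑ _i : Fin d, ((mm k : ℝ) * (mm k : ℝ)) := by
        apply Finset.sum_le_sum
        intro i _
        have : |(k i : ℝ)| ≤ (mm k : ℝ) := by
          have h1 : ((k i).natAbs : ℝ) = |(k i : ℝ)| := by
            rw [Nat.cast_natAbs]; push_cast; ring
          rw [← h1]
          exact_mod_cast natAbs_le_mm k i
        calc ((k i : ℝ))^2 = |(k i : ℝ)|^2 := (sq_abs _).symm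
          _ ≤ (mm k : ℝ)^2 := by
              apply pow_le_pow_left₀ (abs_nonneg _) this
          _ = (mm k : ℝ) * (mm k : ℝ) := sq (mm k : ℝ) ▸ by ring
    _ = d * ((mm k : ℝ) * (mm k : ℝ)) := by
        rw [Finset.sum_const, Finset.card_univ, Fintype.card_fin, nsmul_eq_mul]

/-- the box of sup-norm radius `N` -/
noncomputable def box (d N : ℕ) : Finset (Fin d → ℤ) := Finset.Icc (fun _ => -(N:ℤ)) (fun _ => (N:ℤ))

lemma mem_box {N : ℕ} {k : Fin d → ℤ} : k ∈ box d N ↔ mm k ≤ N := by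
  rw [box, Finset.mem_Icc, mm_le_iff, Pi.le_def, Pi.le_def]
  constructor
  · rintro ⟨h1, h2⟩ i
    have := h1 i; have := h2 i; omega
  · intro h
    exact ⟨fun i => by have := h i; omega, fun i => by have := h i; omega⟩

lemma card_box (N : ℕ) : (box d N).card = (2*N+1)^d := by
  rw [box, Pi.card_Icc]
  have h : ((N:ℤ) + 1 - (-(N:ℤ))).toNat = 2*N+1 := by omega
  simp only [Int.card_Icc, h, Finset.prod_const, Finset.card_univ, Fintype.card_fin]

lemma box_subset {N N' : ℕ} (h : N ≤ N') : box d N ⊆ box d N' := by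
  intro k hk
  rw [mem_box] at *
  omega

lemma card_filter_le (hd : 0 < d) (N n : ℕ) :
    (((box d N).filter fun k => mm k = n).card : ℝ) ≤ 2*d*2^d*(1+n:ℝ)^(d-1) := by
  have hc : (1:ℝ) ≤ 2*d*2^d*(1+n:ℝ)^(d-1) := by
    have h1 : (1:ℝ) ≤ (d:ℝ) := by exact_mod_cast hd
    have h2 : (1:ℝ) ≤ (2:ℝ)^d := one_le_pow₀ (by norm_num)
    have hn : (0:ℝ) ≤ (n:ℝ) := Nat.cast_nonneg n
    have h3 : (1:ℝ) ≤ (1+n:ℝ)^(d-1) := one_le_pow₀ (by linarith)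
    have h4 : (1:ℝ) ≤ 2^d * (1+n:ℝ)^(d-1) := by
      calc (1:ℝ) = 1*1 := by ring
        _ ≤ 2^d * (1+n:ℝ)^(d-1) := mul_le_mul h2 h3 zero_le_one (by positivity)
    calc (1:ℝ) = 1*1 := by ring
      _ ≤ (2*d) * (2^d * (1+n:ℝ)^(d-1)) :=
          mul_le_mul (by linarith) h4 zero_le_one (by positivity)
      _ = 2*d*2^d*(1+n:ℝ)^(d-1) := by ring
  match n with
  | 0 =>
    have hsub : (box d N).filter (fun k => mm k = 0) ⊆ box d 0 := by
      intro k hk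
      rw [Finset.mem_filter] at hk
      rw [mem_box, hk.2]
    have := Finset.card_le_card hsub
    rw [card_box] at this
    have : ((box d N).filter (fun k => mm k = 0)).card ≤ 1 := by
      simpa using this
    calc (((box d N).filter fun k => mm k = 0).card : ℝ) ≤ 1 := by exact_mod_cast this
      _ ≤ _ := hc
  | (j+1) =>
    have hsub : (box d N).filter (fun k => mm k = j+1) ⊆ box d (j+1) \ box d j := by
      intro k hk
      rw [Finset.mem_filter] at hk
      rw [Finset.mem_sdiff, mem_box, mem_box]
      omega
    have hcard : ((box d N).filter (fun k => mm k = j+1)).card ≤ (2*(j+1)+1)^d - (2*j+1)^d := by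
      calc _ ≤ (box d (j+1) \ box d j).card := Finset.card_le_card hsub
        _ = (box d (j+1)).card - (box d j).card :=
            Finset.card_sdiff_of_subset (box_subset (by omega))
        _ = (2*(j+1)+1)^d - (2*j+1)^d := by rw [card_box, card_box]
    have hle : (2*j+1)^d ≤ (2*(j+1)+1)^d := Nat.pow_le_pow_left (by omega) d
    have hcast : (((2*(j+1)+1)^d - (2*j+1)^d : ℕ) : ℝ)
        = ((2*(j+1)+1:ℕ):ℝ)^d - ((2*j+1:ℕ):ℝ)^d := by
      push_cast [Nat.cast_sub hle]
      ring
    -- real bound on the difference of powers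
    set a : ℝ := ((2*(j+1)+1:ℕ):ℝ) with ha
    set b : ℝ := ((2*j+1:ℕ):ℝ) with hb
    have hab : b ≤ a := by
      rw [ha, hb]
      exact_mod_cast (by omega : 2*j+1 ≤ 2*(j+1)+1)
    have hbpos : (0:ℝ) ≤ b := by positivity
    have hgeom : a^d - b^d = (∑ i ∈ Finset.range d, a ^ i * b ^ (d - 1 - i)) * (a - b) :=
      (geom_sum₂_mul a b d).symm
    have hterm : ∀ i ∈ Finset.range d, a ^ i * b ^ (d-1-i) ≤ a^(d-1) := by
      intro i hi
      rw [Finset.mem_range] at hi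
      calc a ^ i * b ^ (d-1-i) ≤ a ^ i * a ^ (d-1-i) := by
            apply mul_le_mul_of_nonneg_left (pow_le_pow_left₀ hbpos hab _) (by positivity)
        _ = a ^ (i + (d-1-i)) := (pow_add a i (d-1-i)).symm
        _ = a ^ (d-1) := by congr 1; omega
    have hsum : (∑ i ∈ Finset.range d, a ^ i * b ^ (d - 1 - i)) ≤ d * a^(d-1) := by
      calc _ ≤ ∑ _i ∈ Finset.range d, a^(d-1) := Finset.sum_le_sum hterm
        _ = d * a^(d-1) := by rw [Finset.sum_const, Finset.card_range, nsmul_eq_mul]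
    have haa : a ≤ 2 * (1+(j+1):ℝ) := by rw [ha]; push_cast; ring_nf; linarith
    have hapow : a^(d-1) ≤ 2^(d-1) * (1+(j+1):ℝ)^(d-1) := by
      calc a^(d-1) ≤ (2 * (1+(j+1):ℝ))^(d-1) := pow_le_pow_left₀ (by positivity) haa _
        _ = 2^(d-1) * (1+(j+1):ℝ)^(d-1) := mul_pow _ _ _
    have h2d : (2:ℝ)^(d-1) ≤ 2^d := pow_le_pow_right₀ (by norm_num) (by omega)
    have hamb : a - b = 2 := by rw [ha, hb]; push_cast; ring
    calc (((box d N).filter fun k => mm k = j+1).card : ℝ)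
        ≤ (((2*(j+1)+1)^d - (2*j+1)^d : ℕ) : ℝ) := by exact_mod_cast hcard
      _ = a^d - b^d := hcast
      _ = (∑ i ∈ Finset.range d, a ^ i * b ^ (d - 1 - i)) * (a - b) := hgeom
      _ ≤ (d * a^(d-1)) * 2 := by
          rw [hamb]
          apply mul_le_mul_of_nonneg_right hsum (by norm_num)
      _ ≤ 2*d*2^d*(1+(j+1):ℝ)^(d-1) := by
          have h4 : a^(d-1) ≤ 2^d * (1+(j+1):ℝ)^(d-1) := by
            calc a^(d-1) ≤ 2^(d-1) * (1+(j+1):ℝ)^(d-1) := hapow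
              _ ≤ 2^d * (1+(j+1):ℝ)^(d-1) := by
                  apply mul_le_mul_of_nonneg_right h2d (by positivity)
          have hd0 : (0:ℝ) ≤ d := by positivity
          nlinarith
      _ = 2*d*2^d*(1+((j+1:ℕ)):ℝ)^(d-1) := by norm_num

lemma sum_box_le (hd : 0 < d) (φ : ℕ → ℝ) (hφ : ∀ n, 0 ≤ φ n) (N : ℕ) :
    ∑ k ∈ box d N, φ (mm k)
      ≤ (2*d*2^d : ℝ) * ∑ n ∈ Finset.range (N+1), (1+n:ℝ)^(d-1) * φ n := by
  have hmaps : ∀ k ∈ box d N, mm k ∈ Finset.range (N+1) := by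
    intro k hk
    rw [mem_box] at hk
    rw [Finset.mem_range]
    omega
  rw [← Finset.sum_fiberwise_of_maps_to hmaps (fun k => φ (mm k))]
  rw [Finset.mul_sum]
  apply Finset.sum_le_sum
  intro n _
  have hinner : ∑ k ∈ (box d N).filter (fun k => mm k = n), φ (mm k)
      = (((box d N).filter fun k => mm k = n).card : ℝ) * φ n := by
    calc ∑ k ∈ (box d N).filter (fun k => mm k = n), φ (mm k)
        = ∑ _k ∈ (box d N).filter (fun k => mm k = n), φ n :=
          Finset.sum_congr rfl (fun k hk => by rw [(Finset.mem_filter.mp hk).2])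
      _ = _ := by rw [Finset.sum_const, nsmul_eq_mul]
  rw [hinner]
  calc (((box d N).filter fun k => mm k = n).card : ℝ) * φ n
      ≤ (2*d*2^d*(1+n:ℝ)^(d-1)) * φ n :=
        mul_le_mul_of_nonneg_right (card_filter_le hd N n) (hφ n)
    _ = 2*d*2^d * ((1+n:ℝ)^(d-1) * φ n) := by ring

lemma harm (N : ℕ) : ∑ n ∈ Finset.range (N+1), ((1+n:ℝ))⁻¹ ≤ 1 + Real.log (N+1) := by
  induction N with
  | zero => simp
  | succ N ih =>
    rw [Finset.sum_range_succ]
    have hN1 : (0:ℝ) < (N:ℝ)+1 := by positivity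
    have hN2 : (0:ℝ) < (N:ℝ)+2 := by positivity
    have key : ((1+((N+1:ℕ)):ℝ))⁻¹ ≤ Real.log ((N:ℝ)+2) - Real.log ((N:ℝ)+1) := by
      have h1 : Real.log (((N:ℝ)+1)/((N:ℝ)+2)) ≤ ((N:ℝ)+1)/((N:ℝ)+2) - 1 :=
        Real.log_le_sub_one_of_pos (by positivity)
      rw [Real.log_div (by positivity) (by positivity)] at h1
      have h2 : ((N:ℝ)+1)/((N:ℝ)+2) - 1 = -((N:ℝ)+2)⁻¹ := by field_simp; norm_num
      rw [h2] at h1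
      have h3 : ((1+((N+1:ℕ)):ℝ)) = (N:ℝ)+2 := by push_cast; ring
      rw [h3]
      linarith
    have h4 : ((N+1:ℕ):ℝ)+1 = (N:ℝ)+2 := by push_cast; ring
    rw [h4]
    have h5 : ((N:ℕ):ℝ)+1 = (N:ℝ)+1 := by push_cast; ring
    rw [h5] at ih
    linarith

lemma log_ineq (M : ℕ) : 1 + Real.log (3*M+1) ≤ 4 * Real.log (2+M) := by
  have hM : (0:ℝ) ≤ (M:ℝ) := Nat.cast_nonneg M
  have h2 : Real.log 2 ≤ Real.log (2+M) := by
    apply Real.log_le_log (by norm_num)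
    linarith
  have hl2 : (1:ℝ)/2 < Real.log 2 := by
    have := Real.log_two_gt_d9
    linarith
  have h3 : Real.log (3*M+1) ≤ 2 * Real.log (2+M) := by
    calc Real.log (3*M+1) ≤ Real.log ((2+M)^2) := by
          apply Real.log_le_log (by positivity)
          nlinarith
      _ = 2 * Real.log (2+M) := by
          rw [Real.log_pow]; push_cast; ring
  linarith

lemma telescope (a N : ℕ) (ha : 0 < a) :
    ∑ n ∈ Finset.Ico a N, (((1+n:ℝ))^2)⁻¹ ≤ (a:ℝ)⁻¹ := by
  have hterm : ∀ n ∈ Finset.Ico a N, (((1+n:ℝ))^2)⁻¹ ≤ (n:ℝ)⁻¹ - ((n:ℝ)+1)⁻¹ := by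
    intro n hn
    rw [Finset.mem_Ico] at hn
    have hn1 : (1:ℝ) ≤ (n:ℝ) := by exact_mod_cast Nat.one_le_cast.mpr (le_trans ha hn.1)
    have h1 : (n:ℝ)⁻¹ - ((n:ℝ)+1)⁻¹ = ((n:ℝ)*((n:ℝ)+1))⁻¹ := by
      field_simp
      ring
    rw [h1]
    apply inv_anti₀ (by positivity)
    nlinarith
  calc ∑ n ∈ Finset.Ico a N, (((1+n:ℝ))^2)⁻¹
      ≤ ∑ n ∈ Finset.Ico a N, ((n:ℝ)⁻¹ - ((n:ℝ)+1)⁻¹) := Finset.sum_le_sum hterm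
    _ ≤ (a:ℝ)⁻¹ := by
        rcases le_or_gt a N with h | h
        · rw [Finset.sum_Ico_eq_sub _ h]
          have e1 : ∀ B : ℕ, ∑ n ∈ Finset.range B, ((n:ℝ)⁻¹ - ((n:ℝ)+1)⁻¹)
              = (0:ℝ)⁻¹ - (B:ℝ)⁻¹ := by
            intro B
            have := Finset.sum_range_sub' (fun n => ((n:ℝ))⁻¹) B
            simp only [Nat.cast_add, Nat.cast_one] at this ⊢
            convert this using 2 with n
            norm_num
          rw [e1, e1]
          have hN : (0:ℝ) ≤ (N:ℝ)⁻¹ := by positivity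
          simp only [inv_zero]
          linarith
        · rw [Finset.Ico_eq_empty (by omega)]
          simp

noncomputable def phiF (d M n : ℕ) : ℝ := if n ≤ 3*M then (((1+n:ℝ))^d)⁻¹ else 0

noncomputable def phiG (d M n : ℕ) : ℝ := if 2*M+1 ≤ n then (((1+n:ℝ))^(2*d))⁻¹ else 0

lemma phiF_nonneg (d M n : ℕ) : 0 ≤ phiF d M n := by
  rw [phiF]; split <;> positivity

lemma phiG_nonneg (d M n : ℕ) : 0 ≤ phiG d M n := by
  rw [phiG]; split <;> positivity

lemma rpow_le_inv_pow {x : ℝ} (hx : 0 ≤ x) {n : ℕ} (h : (n:ℝ) ≤ x) :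
    (1+x) ^ (-(d:ℝ)) ≤ (((1+n:ℝ))^d)⁻¹ := by
  have h1 : (1+x) ^ (-(d:ℝ)) = ((1+x)^(d:ℕ))⁻¹ := by
    rw [← Real.rpow_natCast (1+x) d, ← Real.rpow_neg (by linarith)]
  rw [h1]
  exact inv_anti₀ (by positivity) (pow_le_pow_left₀ (by positivity) (by linarith) d)

lemma inv_pow_le₂ {x y : ℝ} (hx : 0 < x) (h : x ≤ 2*y) :
    ((y:ℝ)^d)⁻¹ ≤ 2^d * (x^d)⁻¹ := by
  have hy : (0:ℝ) < y := by linarith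
  have h2 : x^d ≤ 2^d*y^d := by
    rw [← mul_pow]
    exact pow_le_pow_left₀ hx.le h d
  have h3 : x^d/2^d ≤ y^d := by
    rw [div_le_iff₀ (by positivity), mul_comm]
    exact h2
  calc ((y:ℝ)^d)⁻¹ ≤ (x^d/2^d)⁻¹ := inv_anti₀ (by positivity) h3
    _ = 2^d * (x^d)⁻¹ := by rw [inv_div, div_eq_mul_inv]

lemma inv_pow_le_gen {c x y : ℝ} (hx : 0 < x) (hc : 0 < c) (h : x ≤ c*y) :
    ((y:ℝ)^d)⁻¹ ≤ c^d * (x^d)⁻¹ := by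
  have hy : (0:ℝ) < y := by nlinarith
  have h2 : x^d ≤ c^d*y^d := by
    rw [← mul_pow]
    exact pow_le_pow_left₀ hx.le h d
  have h3 : x^d/c^d ≤ y^d := by
    rw [div_le_iff₀ (by positivity), mul_comm]
    exact h2
  calc ((y:ℝ)^d)⁻¹ ≤ (x^d/c^d)⁻¹ := inv_anti₀ (by positivity) h3
    _ = c^d * (x^d)⁻¹ := by rw [inv_div, div_eq_mul_inv]

lemma pointwise (hd : 0 < d) (ℓ k : Fin d → ℤ) :
    (1 + znorm k) ^ (-(d:ℝ)) * (1 + znorm (ℓ - k)) ^ (-(d:ℝ))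
      ≤ 2^d * (((1+(mm ℓ):ℝ))^d)⁻¹ * phiF d (mm ℓ) (mm k)
        + 2^d * (((1+(mm ℓ):ℝ))^d)⁻¹ * phiF d (mm ℓ) (mm (ℓ-k))
        + 2^d * phiG d (mm ℓ) (mm k) := by
  have hA : (1 + znorm k) ^ (-(d:ℝ)) ≤ (((1+(mm k):ℝ))^d)⁻¹ :=
    rpow_le_inv_pow (znorm_nonneg k) (mm_le_znorm hd k)
  have hB : (1 + znorm (ℓ-k)) ^ (-(d:ℝ)) ≤ (((1+(mm (ℓ-k)):ℝ))^d)⁻¹ :=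
    rpow_le_inv_pow (znorm_nonneg (ℓ-k)) (mm_le_znorm hd (ℓ-k))
  have hA0 : (0:ℝ) ≤ (1 + znorm k) ^ (-(d:ℝ)) :=
    Real.rpow_nonneg (by linarith [znorm_nonneg k]) _
  have hprod : (1 + znorm k) ^ (-(d:ℝ)) * (1 + znorm (ℓ - k)) ^ (-(d:ℝ))
      ≤ (((1+(mm k):ℝ))^d)⁻¹ * (((1+(mm (ℓ-k)):ℝ))^d)⁻¹ :=
    mul_le_mul hA hB (Real.rpow_nonneg (by linarith [znorm_nonneg (ℓ-k)]) _) (by positivity)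
  set M := mm ℓ with hM
  set n := mm k with hn
  set n' := mm (ℓ-k) with hn'
  have hq : M ≤ n' + n := mm_le_sub_add ℓ k
  have hq2 : n' ≤ M + n := mm_sub_le ℓ k
  have hq3 : n ≤ n' + M := by
    have h := mm_le_sub_add k ℓ
    rw [show k - ℓ = -(ℓ-k) by abel, mm_neg] at h
    omega
  have t1 : (0:ℝ) ≤ 2^d * (((1+M:ℝ))^d)⁻¹ * phiF d M n := by
    have := phiF_nonneg d M n; positivity
  have t2 : (0:ℝ) ≤ 2^d * (((1+M:ℝ))^d)⁻¹ * phiF d M n' := by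
    have := phiF_nonneg d M n'; positivity
  have t3 : (0:ℝ) ≤ 2^d * phiG d M n := by
    have := phiG_nonneg d M n; positivity
  by_cases h1 : 2*n ≤ M
  · -- first term dominates
    have hc : (1+M:ℝ) ≤ 2*(1+n') := by exact_mod_cast (by omega : 1+M ≤ 2*(1+n'))
    have hBB : (((1+n':ℝ))^d)⁻¹ ≤ 2^d * (((1+M:ℝ))^d)⁻¹ :=
      inv_pow_le₂ (by positivity) hc
    have hF : phiF d M n = (((1+n:ℝ))^d)⁻¹ := if_pos (by omega)
    have key : (1 + znorm k) ^ (-(d:ℝ)) * (1 + znorm (ℓ - k)) ^ (-(d:ℝ))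
        ≤ 2^d * (((1+M:ℝ))^d)⁻¹ * phiF d M n := by
      calc (1 + znorm k) ^ (-(d:ℝ)) * (1 + znorm (ℓ - k)) ^ (-(d:ℝ))
          ≤ (((1+n:ℝ))^d)⁻¹ * (((1+n':ℝ))^d)⁻¹ := hprod
        _ ≤ (((1+n:ℝ))^d)⁻¹ * (2^d * (((1+M:ℝ))^d)⁻¹) :=
            mul_le_mul_of_nonneg_left hBB (by positivity)
        _ = 2^d * (((1+M:ℝ))^d)⁻¹ * phiF d M n := by rw [hF]; ring
    linarith
  · by_cases h2 : n ≤ 2*M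
    · -- second term dominates
      have hc : (1+M:ℝ) ≤ 2*(1+n) := by exact_mod_cast (by omega : 1+M ≤ 2*(1+n))
      have hAA : (((1+n:ℝ))^d)⁻¹ ≤ 2^d * (((1+M:ℝ))^d)⁻¹ :=
        inv_pow_le₂ (by positivity) hc
      have hF : phiF d M n' = (((1+n':ℝ))^d)⁻¹ := if_pos (by omega)
      have key : (1 + znorm k) ^ (-(d:ℝ)) * (1 + znorm (ℓ - k)) ^ (-(d:ℝ))
          ≤ 2^d * (((1+M:ℝ))^d)⁻¹ * phiF d M n' := by
        calc (1 + znorm k) ^ (-(d:ℝ)) * (1 + znorm (ℓ - k)) ^ (-(d:ℝ))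
            ≤ (((1+n:ℝ))^d)⁻¹ * (((1+n':ℝ))^d)⁻¹ := hprod
          _ ≤ (2^d * (((1+M:ℝ))^d)⁻¹) * (((1+n':ℝ))^d)⁻¹ :=
              mul_le_mul_of_nonneg_right hAA (by positivity)
          _ = 2^d * (((1+M:ℝ))^d)⁻¹ * phiF d M n' := by rw [hF]
      linarith
    · -- third term dominates
      have hc : (1+n:ℝ) ≤ 2*(1+n') := by exact_mod_cast (by omega : 1+n ≤ 2*(1+n'))
      have hBB : (((1+n':ℝ))^d)⁻¹ ≤ 2^d * (((1+n:ℝ))^d)⁻¹ :=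
        inv_pow_le₂ (by positivity) hc
      have hG : phiG d M n = (((1+n:ℝ))^(2*d))⁻¹ := if_pos (by omega)
      have key : (1 + znorm k) ^ (-(d:ℝ)) * (1 + znorm (ℓ - k)) ^ (-(d:ℝ))
          ≤ 2^d * phiG d M n := by
        calc (1 + znorm k) ^ (-(d:ℝ)) * (1 + znorm (ℓ - k)) ^ (-(d:ℝ))
            ≤ (((1+n:ℝ))^d)⁻¹ * (((1+n':ℝ))^d)⁻¹ := hprod
          _ ≤ (((1+n:ℝ))^d)⁻¹ * (2^d * (((1+n:ℝ))^d)⁻¹) :=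
              mul_le_mul_of_nonneg_left hBB (by positivity)
          _ = 2^d * phiG d M n := by
              rw [hG, two_mul, pow_add, mul_inv]
              ring
      linarith

lemma sumF_le (hd : 0 < d) (M : ℕ) (t : Finset (Fin d → ℤ)) :
    ∑ k ∈ t, phiF d M (mm k) ≤ (2*d*2^d:ℝ) * (4 * Real.log (2+M)) := by
  set N := t.sup mm with hN
  have hsub : t ⊆ box d N := fun k hk => mem_box.mpr (Finset.le_sup hk)
  calc ∑ k ∈ t, phiF d M (mm k)
      ≤ ∑ k ∈ box d N, phiF d M (mm k) :=
        Finset.sum_le_sum_of_subset_of_nonneg hsub (fun k _ _ => phiF_nonneg d M (mm k))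
    _ ≤ (2*d*2^d:ℝ) * ∑ n ∈ Finset.range (N+1), (1+n:ℝ)^(d-1) * phiF d M n :=
        sum_box_le hd _ (phiF_nonneg d M) N
    _ ≤ (2*d*2^d:ℝ) * (4 * Real.log (2+M)) := by
        apply mul_le_mul_of_nonneg_left _ (by positivity)
        have hterm : ∀ n ∈ Finset.range (N+1),
            (1+n:ℝ)^(d-1) * phiF d M n = if n ≤ 3*M then ((1+n:ℝ))⁻¹ else 0 := by
          intro n _
          rw [phiF]
          split
          · have h0 : (0:ℝ) < (1+n:ℝ)^(d-1) := by positivity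
            have hpow : ((1+n:ℝ))^d = (1+n:ℝ)^(d-1) * (1+n:ℝ) := by
              conv_lhs => rw [show d = (d-1)+1 by omega]
              rw [pow_succ]
            rw [hpow, mul_inv, ← mul_assoc, mul_inv_cancel₀ (ne_of_gt h0), one_mul]
          · rw [mul_zero]
        rw [Finset.sum_congr rfl hterm, ← Finset.sum_filter]
        calc ∑ n ∈ (Finset.range (N+1)).filter (fun n => n ≤ 3*M), ((1+n:ℝ))⁻¹
            ≤ ∑ n ∈ Finset.range (3*M+1), ((1+n:ℝ))⁻¹ :=
              Finset.sum_le_sum_of_subset_of_nonneg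
                (fun n hn => by
                  rw [Finset.mem_filter] at hn
                  rw [Finset.mem_range]
                  omega)
                (fun n _ _ => by positivity)
          _ ≤ 1 + Real.log ((3*M:ℕ)+1) := harm (3*M)
          _ = 1 + Real.log (3*(M:ℝ)+1) := by norm_num
          _ ≤ 4 * Real.log (2+M) := log_ineq M

lemma sumG_le (hd : 0 < d) (M : ℕ) (t : Finset (Fin d → ℤ)) :
    ∑ k ∈ t, phiG d M (mm k) ≤ (2*d*2^d:ℝ) * (((1+M:ℝ))^d)⁻¹ := by
  set N := t.sup mm with hN
  have hsub : t ⊆ box d N := fun k hk => mem_box.mpr (Finset.le_sup hk)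
  have hM0 : (0:ℝ) < 1+(M:ℝ) := by positivity
  calc ∑ k ∈ t, phiG d M (mm k)
      ≤ ∑ k ∈ box d N, phiG d M (mm k) :=
        Finset.sum_le_sum_of_subset_of_nonneg hsub (fun k _ _ => phiG_nonneg d M (mm k))
    _ ≤ (2*d*2^d:ℝ) * ∑ n ∈ Finset.range (N+1), (1+n:ℝ)^(d-1) * phiG d M n :=
        sum_box_le hd _ (phiG_nonneg d M) N
    _ ≤ (2*d*2^d:ℝ) * (((1+M:ℝ))^d)⁻¹ := by
        apply mul_le_mul_of_nonneg_left _ (by positivity)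
        have hterm : ∀ n ∈ Finset.range (N+1),
            (1+n:ℝ)^(d-1) * phiG d M n
              ≤ (((1+M:ℝ))^(d-1))⁻¹ * (if 2*M+1 ≤ n then (((1+n:ℝ))^2)⁻¹ else 0) := by
          intro n _
          rw [phiG]
          split
          · rename_i hcn
            have h0 : (0:ℝ) < (1+n:ℝ)^(d-1) := by positivity
            have hsplit : (1+n:ℝ)^(2*d) = (1+n:ℝ)^(d-1) * ((1+n:ℝ)^(d-1) * (1+n:ℝ)^2) := by
              rw [← pow_add, ← pow_add]
              congr 1
              omega
            rw [hsplit, mul_inv, ← mul_assoc, mul_inv_cancel₀ (ne_of_gt h0), one_mul, mul_inv]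
            apply mul_le_mul_of_nonneg_right _ (by positivity)
            apply inv_anti₀ (by positivity)
            apply pow_le_pow_left₀ (by positivity)
            have : (M:ℝ) ≤ (n:ℝ) := by exact_mod_cast (by omega : M ≤ n)
            linarith
          · rw [mul_zero, mul_zero]
        calc ∑ n ∈ Finset.range (N+1), (1+n:ℝ)^(d-1) * phiG d M n
            ≤ ∑ n ∈ Finset.range (N+1),
                (((1+M:ℝ))^(d-1))⁻¹ * (if 2*M+1 ≤ n then (((1+n:ℝ))^2)⁻¹ else 0) :=
              Finset.sum_le_sum hterm
          _ = (((1+M:ℝ))^(d-1))⁻¹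
              * ∑ n ∈ Finset.range (N+1), (if 2*M+1 ≤ n then (((1+n:ℝ))^2)⁻¹ else 0) := by
              rw [Finset.mul_sum]
          _ ≤ (((1+M:ℝ))^(d-1))⁻¹ * ((1+M:ℝ))⁻¹ := by
              apply mul_le_mul_of_nonneg_left _ (by positivity)
              rw [← Finset.sum_filter]
              calc ∑ n ∈ (Finset.range (N+1)).filter (fun n => 2*M+1 ≤ n), (((1+n:ℝ))^2)⁻¹
                  ≤ ∑ n ∈ Finset.Ico (2*M+1) (N+1), (((1+n:ℝ))^2)⁻¹ :=
                    Finset.sum_le_sum_of_subset_of_nonneg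
                      (fun n hn => by
                        rw [Finset.mem_filter, Finset.mem_range] at hn
                        rw [Finset.mem_Ico]
                        omega)
                      (fun n _ _ => by positivity)
                _ ≤ ((2*M+1:ℕ):ℝ)⁻¹ := telescope (2*M+1) (N+1) (by omega)
                _ ≤ ((1+M:ℝ))⁻¹ := by
                    apply inv_anti₀ hM0
                    push_cast
                    linarith [Nat.cast_nonneg (α := ℝ) M]
          _ = (((1+M:ℝ))^d)⁻¹ := by
              have hpow : ((1+M:ℝ))^d = (1+M:ℝ)^(d-1) * (1+M:ℝ) := by
                conv_lhs => rw [show d = (d-1)+1 by omega]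
                rw [pow_succ]
              rw [hpow, mul_inv]

lemma main_sum (hd : 0 < d) (ℓ : Fin d → ℤ) (s : Finset (Fin d → ℤ)) :
    ∑ k ∈ s, (1 + znorm k) ^ (-(d:ℝ)) * (1 + znorm (ℓ - k)) ^ (-(d:ℝ))
      ≤ ((2:ℝ)^d * (2*d*2^d) * 10) * (((1+(mm ℓ):ℝ))^d)⁻¹ * Real.log (2+(mm ℓ)) := by
  set M := mm ℓ with hM
  set q : ℝ := (((1+M:ℝ))^d)⁻¹ with hq
  set K : ℝ := (2*d*2^d:ℝ) with hK
  set L : ℝ := Real.log (2+M) with hL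
  have hq0 : (0:ℝ) ≤ q := by rw [hq]; positivity
  have hK0 : (0:ℝ) < K := by
    rw [hK]
    have : (0:ℝ) < (d:ℝ) := by exact_mod_cast hd
    positivity
  have hL0 : (1:ℝ)/2 ≤ L := by
    rw [hL]
    have h2 : Real.log 2 ≤ Real.log (2+M) := by
      apply Real.log_le_log (by norm_num)
      have : (0:ℝ) ≤ (M:ℝ) := Nat.cast_nonneg M
      linarith
    have := Real.log_two_gt_d9
    linarith
  have himg : ∑ k ∈ s, phiF d M (mm (ℓ-k)) = ∑ x ∈ s.image (fun k => ℓ - k), phiF d M (mm x) := by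
    rw [Finset.sum_image]
    intro a _ b _ h
    exact sub_right_injective h
  calc ∑ k ∈ s, (1 + znorm k) ^ (-(d:ℝ)) * (1 + znorm (ℓ - k)) ^ (-(d:ℝ))
      ≤ ∑ k ∈ s, (2^d * q * phiF d M (mm k) + 2^d * q * phiF d M (mm (ℓ-k))
          + 2^d * phiG d M (mm k)) :=
        Finset.sum_le_sum (fun k _ => pointwise hd ℓ k)
    _ = 2^d * q * (∑ k ∈ s, phiF d M (mm k)) + 2^d * q * (∑ k ∈ s, phiF d M (mm (ℓ-k)))
        + 2^d * (∑ k ∈ s, phiG d M (mm k)) := by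
        rw [Finset.sum_add_distrib, Finset.sum_add_distrib,
          Finset.mul_sum, Finset.mul_sum, Finset.mul_sum]
    _ ≤ 2^d * q * (K * (4*L)) + 2^d * q * (K * (4*L)) + 2^d * (K * q) := by
        have b1 : ∑ k ∈ s, phiF d M (mm k) ≤ K * (4*L) := sumF_le hd M s
        have b2 : ∑ k ∈ s, phiF d M (mm (ℓ-k)) ≤ K * (4*L) := by
          rw [himg]
          exact sumF_le hd M _
        have b3 : ∑ k ∈ s, phiG d M (mm k) ≤ K * q := sumG_le hd M s
        have h2d : (0:ℝ) ≤ 2^d * q := by positivity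
        have h2d' : (0:ℝ) ≤ (2:ℝ)^d := by positivity
        gcongr
    _ ≤ 2^d * q * (K * (4*L)) + 2^d * q * (K * (4*L)) + 2^d * (K * q) * (2*L) := by
        have : 2^d * (K * q) ≤ 2^d * (K * q) * (2*L) := by
          apply le_mul_of_one_le_right (by positivity)
          linarith
        linarith
    _ = ((2:ℝ)^d * K * 10) * q * L := by ring

lemma mono_bound (hd : 0 < d) {r s : ℝ} (hr : 0 < r) (hrs : r ≤ s) :
    (((1+s):ℝ)^d)⁻¹ * Real.log (2+s) ≤ 3 * (((1+r):ℝ)^d)⁻¹ * Real.log (2+r) := by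
  have h1r : (0:ℝ) < 1+r := by linarith
  have h1s : (0:ℝ) < 1+s := by linarith
  have hlogr : (1:ℝ)/2 ≤ Real.log (2+r) := by
    have h2 : Real.log 2 ≤ Real.log (2+r) := Real.log_le_log (by norm_num) (by linarith)
    have := Real.log_two_gt_d9
    linarith
  have hlog : Real.log (2+s) ≤ Real.log (2+r) + (1+s)/(1+r) := by
    have hfrac : (2+s) ≤ (2+r)*(1+s)/(1+r) := by
      rw [le_div_iff₀ h1r]
      nlinarith
    calc Real.log (2+s) ≤ Real.log ((2+r)*(1+s)/(1+r)) :=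
          Real.log_le_log (by linarith) hfrac
      _ = Real.log (2+r) + (Real.log (1+s) - Real.log (1+r)) := by
          rw [Real.log_div (by positivity) (by positivity), Real.log_mul (by positivity) (by positivity)]
          ring
      _ = Real.log (2+r) + Real.log ((1+s)/(1+r)) := by
          rw [Real.log_div (by positivity) (by positivity)]
      _ ≤ Real.log (2+r) + (1+s)/(1+r) := by
          have h := Real.log_le_sub_one_of_pos (x := (1+s)/(1+r)) (by positivity)
          linarith
  have hinv : (((1+s):ℝ)^d)⁻¹ ≤ (((1+r):ℝ)^d)⁻¹ :=
    inv_anti₀ (by positivity) (pow_le_pow_left₀ (by positivity) (by linarith) d)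
  have hsecond : (((1+s):ℝ)^d)⁻¹ * ((1+s)/(1+r)) ≤ (((1+r):ℝ)^d)⁻¹ := by
    have hsplit : ((1+s):ℝ)^d = (1+s:ℝ)^(d-1) * (1+s) := by
      conv_lhs => rw [show d = (d-1)+1 by omega]
      rw [pow_succ]
    have hsplit' : ((1+r):ℝ)^d = (1+r:ℝ)^(d-1) * (1+r) := by
      conv_lhs => rw [show d = (d-1)+1 by omega]
      rw [pow_succ]
    have e1 : (((1+s):ℝ)^d)⁻¹ * ((1+s)/(1+r)) = ((1+s:ℝ)^(d-1))⁻¹ * (1+r)⁻¹ := by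
      rw [hsplit, mul_inv]
      field_simp
    rw [e1, hsplit', mul_inv]
    apply mul_le_mul_of_nonneg_right _ (by positivity)
    exact inv_anti₀ (by positivity) (pow_le_pow_left₀ (by positivity) (by linarith) _)
  have hlog0 : (0:ℝ) ≤ Real.log (2+r) := by linarith
  calc (((1+s):ℝ)^d)⁻¹ * Real.log (2+s)
      ≤ (((1+s):ℝ)^d)⁻¹ * (Real.log (2+r) + (1+s)/(1+r)) := by
        apply mul_le_mul_of_nonneg_left hlog (by positivity)
    _ = (((1+s):ℝ)^d)⁻¹ * Real.log (2+r) + (((1+s):ℝ)^d)⁻¹ * ((1+s)/(1+r)) := by ring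
    _ ≤ (((1+r):ℝ)^d)⁻¹ * Real.log (2+r) + (((1+r):ℝ)^d)⁻¹ := by
        have := mul_le_mul_of_nonneg_right hinv hlog0
        linarith [hsecond]
    _ ≤ (((1+r):ℝ)^d)⁻¹ * Real.log (2+r) + (((1+r):ℝ)^d)⁻¹ * (2 * Real.log (2+r)) := by
        have h0 : (0:ℝ) ≤ (((1+r):ℝ)^d)⁻¹ := by positivity
        nlinarith
    _ = 3 * (((1+r):ℝ)^d)⁻¹ * Real.log (2+r) := by ring

end Stmt4Aux


/-- **Discrete convolution estimate, borderline case `p = d`**: there is `C > 0`, depending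
only on `d`, such that for all `r > 0` and all `ℓ ∈ ℤ^d` with `|ℓ| ≥ 2r`,
`∑_{k ∈ ℤ^d} (1+|k|)^{-d} (1+|ℓ−k|)^{-d} ≤ C (1+r)^{-d} log(2+r)`. -/
theorem stmt4 (d : ℕ) (hd : 1 ≤ d) :
    ∃ C : ℝ, 0 < C ∧ ∀ r : ℝ, 0 < r → ∀ ℓ : Fin d → ℤ, 2 * r ≤ znorm ℓ →
      (∑' k : Fin d → ℤ, (1 + znorm k) ^ (-(d : ℝ)) * (1 + znorm (ℓ - k)) ^ (-(d : ℝ)))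
        ≤ C * (1 + r) ^ (-(d : ℝ)) * Real.log (2 + r) := by
  open Stmt4Aux in
  have hd0 : 0 < d := hd
  have hd1 : (1:ℝ) ≤ (d:ℝ) := by exact_mod_cast hd
  have hsd : (1:ℝ) ≤ Real.sqrt d := by
    rw [show (1:ℝ) = Real.sqrt 1 from Real.sqrt_one.symm]
    exact Real.sqrt_le_sqrt hd1
  have hsd0 : (0:ℝ) < Real.sqrt d := by linarith
  set C1 : ℝ := (2:ℝ)^d * (2*d*2^d) * 10 with hC1
  have hC10 : 0 < C1 := by
    rw [hC1]
    have : (0:ℝ) < (d:ℝ) := by linarith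
    positivity
  refine ⟨C1 * ((Real.sqrt d)^d * 3), by positivity, ?_⟩
  intro r hr ℓ hℓ
  set M := mm ℓ with hM
  have hrpow : (1 + r) ^ (-(d : ℝ)) = (((1+r):ℝ)^d)⁻¹ := by
    rw [← Real.rpow_natCast (1+r) d, ← Real.rpow_neg (by linarith)]
  have hlogr : (0:ℝ) ≤ Real.log (2+r) := Real.log_nonneg (by linarith)
  -- the key comparison of the M-bound with the r-bound
  have hfinal : C1 * (((1+(M:ℝ)))^d)⁻¹ * Real.log (2+(M:ℝ))
      ≤ C1 * ((Real.sqrt d)^d * 3) * (1 + r) ^ (-(d : ℝ)) * Real.log (2 + r) := by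
    set s' : ℝ := Real.sqrt d * M with hs'
    have hM0 : (0:ℝ) ≤ (M:ℝ) := Nat.cast_nonneg M
    have hrs : r ≤ s' := by
      have h1 : 2*r ≤ znorm ℓ := hℓ
      have h2 : znorm ℓ ≤ Real.sqrt d * M := znorm_le_mm ℓ
      rw [hs']
      linarith
    have hMs : (M:ℝ) ≤ s' := by
      rw [hs']
      nlinarith
    have hbase : 1 + s' ≤ Real.sqrt d * (1 + M) := by
      rw [hs']
      nlinarith
    have h1 : (((1+(M:ℝ)))^d)⁻¹ ≤ (Real.sqrt d)^d * (((1+s'):ℝ)^d)⁻¹ :=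
      inv_pow_le_gen (by positivity) hsd0 hbase
    have h2 : Real.log (2+(M:ℝ)) ≤ Real.log (2+s') := Real.log_le_log (by linarith) (by linarith)
    have h3 : (((1+s'):ℝ)^d)⁻¹ * Real.log (2+s') ≤ 3 * (((1+r):ℝ)^d)⁻¹ * Real.log (2+r) :=
      mono_bound hd0 hr hrs
    have hlogM : (0:ℝ) ≤ Real.log (2+(M:ℝ)) := Real.log_nonneg (by linarith)
    have hlogs : (0:ℝ) ≤ Real.log (2+s') := Real.log_nonneg (by linarith)
    calc C1 * (((1+(M:ℝ)))^d)⁻¹ * Real.log (2+(M:ℝ))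
        ≤ C1 * ((Real.sqrt d)^d * (((1+s'):ℝ)^d)⁻¹) * Real.log (2+s') := by
          apply mul_le_mul (mul_le_mul_of_nonneg_left h1 hC10.le) h2 hlogM (by positivity)
      _ = C1 * (Real.sqrt d)^d * ((((1+s'):ℝ)^d)⁻¹ * Real.log (2+s')) := by ring
      _ ≤ C1 * (Real.sqrt d)^d * (3 * (((1+r):ℝ)^d)⁻¹ * Real.log (2+r)) := by
          apply mul_le_mul_of_nonneg_left h3 (by positivity)
      _ = C1 * ((Real.sqrt d)^d * 3) * (1 + r) ^ (-(d : ℝ)) * Real.log (2 + r) := by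
          rw [hrpow]
          ring
  apply tsum_le_of_sum_le'
  · have : (0:ℝ) ≤ (1 + r) ^ (-(d : ℝ)) := Real.rpow_nonneg (by linarith) _
    positivity
  · intro u
    exact (main_sum hd0 ℓ u).trans hfinal
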